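/- Every star of order at least 3 is in Class 2; that is, subdividing any single edge of K_{1,n} with n ≥ 2 does not change the super domination number. -/

import Mathlib

open SimpleGraph

/-- `S` is a super dominating set of `G`: every vertex `u ∉ S` has some `v ∈ S`
with `N(v) ∩ Sᶜ = {u}`. -/
def SuperDomSet {V : Type} (G : SimpleGraph V) (S : Set V) : Prop :=
  ∀ u ∈ Sᶜ, ∃ v ∈ S, G.neighborSet v ∩ Sᶜ = {u}

/-- The super domination number `γ_sp(G)`. -/
noncomputable def superDomNum {V : Type} (G : SimpleGraph V) : ℕ :=
  sInf {n | ∃ S : Set V, SuperDomSet G S ∧ S.ncard = n}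

/-- `S` is a dominating set of `G`. -/
def DomSet {V : Type} (G : SimpleGraph V) (S : Set V) : Prop :=
  ∀ u ∉ S, ∃ v ∈ S, G.Adj v u

/-- The domination number `γ(G)`. -/
noncomputable def domNum {V : Type} (G : SimpleGraph V) : ℕ :=
  sInf {n | ∃ S : Set V, DomSet G S ∧ S.ncard = n}

/-- `S` is a total dominating set of `G`: every vertex has a neighbor in `S`. -/
def TotalDomSet {V : Type} (G : SimpleGraph V) (S : Set V) : Prop :=
  ∀ u : V, ∃ v ∈ S, G.Adj v u

/-- The total domination number `γ_t(G)`. -/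
noncomputable def totalDomNum {V : Type} (G : SimpleGraph V) : ℕ :=
  sInf {n | ∃ S : Set V, TotalDomSet G S ∧ S.ncard = n}

/-- A leaf is a vertex of degree 1. -/
def IsLeaf {V : Type} (G : SimpleGraph V) (v : V) : Prop :=
  (G.neighborSet v).ncard = 1

/-- A support vertex is a vertex adjacent to a leaf. -/
def IsSupport {V : Type} (G : SimpleGraph V) (v : V) : Prop :=
  ∃ u, G.Adj v u ∧ IsLeaf G u

/-- The graph obtained from `G` by subdividing each edge in `F` once: for `e ∈ F`
the edge is removed and replaced by a path of length 2 through the new vertex `e`. -/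
def subdivide {V : Type} (G : SimpleGraph V) (F : Set (Sym2 V)) :
    SimpleGraph (V ⊕ F) where
  Adj x y :=
    match x, y with
    | Sum.inl a, Sum.inl b => G.Adj a b ∧ s(a, b) ∉ F
    | Sum.inl a, Sum.inr e => a ∈ (e : Sym2 V)
    | Sum.inr e, Sum.inl a => a ∈ (e : Sym2 V)
    | Sum.inr _, Sum.inr _ => False
  symm := by
    constructor
    rintro (a | e) (b | f) h
    · exact ⟨h.1.symm, by rw [Sym2.eq_swap]; exact h.2⟩
    · exact h
    · exact h
    · exact h
  loopless := by
    constructor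
    rintro (a | e) h
    · exact G.loopless.irrefl a h.1
    · exact h


lemma sdn_eq {V : Type} (G : SimpleGraph V) (k : ℕ)
    (h1 : ∃ S, SuperDomSet G S ∧ S.ncard = k)
    (h2 : ∀ S, SuperDomSet G S → k ≤ S.ncard) : superDomNum G = k := by
  refine le_antisymm (Nat.sInf_le h1) ?_
  refine le_csInf ⟨k, h1⟩ ?_
  rintro m ⟨S, hS, rfl⟩
  exact h2 S hS

lemma star_sdn (n : ℕ) (hn : 1 ≤ n) :
    superDomNum (completeBipartiteGraph Unit (Fin n)) = n := by
  have hz : 0 < n := hn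
  have hcard : Nat.card (Unit ⊕ Fin n) = 1 + n := by simp
  refine sdn_eq _ n ⟨({Sum.inr ⟨0, hz⟩} : Set (Unit ⊕ Fin n))ᶜ, ?_, ?_⟩ ?_
  · intro u hu
    rw [compl_compl] at hu
    refine ⟨Sum.inl (), by simp, ?_⟩
    rw [compl_compl, Set.inter_eq_self_of_subset_right]
    · exact hu ▸ rfl
    · rintro w rfl
      simp [neighborSet]
  · have := Set.ncard_add_ncard_compl ({Sum.inr ⟨0, hz⟩} : Set (Unit ⊕ Fin n))
    rw [hcard, Set.ncard_singleton] at this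
    omega
  · intro S hS
    -- key: any leaf in Sᶜ forces center in S with N(center)∩Sᶜ = {leaf}
    have key : ∀ b : Fin n, Sum.inr b ∈ Sᶜ →
        Sum.inl () ∈ S ∧
        (completeBipartiteGraph Unit (Fin n)).neighborSet (Sum.inl ()) ∩ Sᶜ
          = {Sum.inr b} := by
      intro b hb
      obtain ⟨v, hvS, hv⟩ := hS _ hb
      have hmem : Sum.inr b ∈
          (completeBipartiteGraph Unit (Fin n)).neighborSet v ∩ Sᶜ := hv ▸ rfl
      rcases v with ⟨⟩ | c
      · exact ⟨hvS, hv⟩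
      · exact absurd hmem.1 (by simp [neighborSet])
    have hsub : Sᶜ.Subsingleton := by
      intro u1 h1 u2 h2
      match u1, u2 with
      | Sum.inl (), Sum.inl () => rfl
      | Sum.inl (), Sum.inr b => exact absurd (key b h2).1 h1
      | Sum.inr b, Sum.inl () => exact absurd (key b h1).1 h2
      | Sum.inr b, Sum.inr c =>
        have := (key b h1).2
        have hc : Sum.inr c ∈
            (completeBipartiteGraph Unit (Fin n)).neighborSet (Sum.inl ()) ∩ Sᶜ :=
          ⟨by simp [neighborSet], h2⟩
        rw [this] at hc
        exact hc.symm
    have h1 : Sᶜ.ncard ≤ 1 := (Set.ncard_le_one_iff (Set.toFinite _)).2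
      fun ha hb => hsub ha hb
    have := Set.ncard_add_ncard_compl S
    rw [hcard] at this
    omega

lemma sub_sdn (n : ℕ) (hn : 2 ≤ n) (a : Fin n) :
    superDomNum (subdivide (completeBipartiteGraph Unit (Fin n))
      {s((Sum.inl () : Unit ⊕ Fin n), Sum.inr a)}) = n := by
  have hnt : Nontrivial (Fin n) := Fin.nontrivial_iff_two_le.mpr hn
  obtain ⟨b, hb⟩ := exists_ne a
  set E : Sym2 (Unit ⊕ Fin n) := s(Sum.inl (), Sum.inr a) with hE
  have hcard : Nat.card ((Unit ⊕ Fin n) ⊕ ({E} : Set (Sym2 (Unit ⊕ Fin n)))) = n + 2 := by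
    simp [Nat.card_sum]; ring
  have hEa : (Sum.inr a : Unit ⊕ Fin n) ∈ E := by
    rw [hE, Sym2.mem_iff]; right; rfl
  have hEc : (Sum.inl () : Unit ⊕ Fin n) ∈ E := by
    rw [hE, Sym2.mem_iff]; left; rfl
  have hEb : ∀ b' : Fin n, b' ≠ a → (Sum.inr b' : Unit ⊕ Fin n) ∉ E := by
    intro b' hb' h
    rw [hE, Sym2.mem_iff] at h
    rcases h with h | h
    · exact absurd h (by simp)
    · exact hb' (by injection h)
  have hne : ∀ b' : Fin n, b' ≠ a →
      s((Sum.inl () : Unit ⊕ Fin n), Sum.inr b') ∉ ({E} : Set (Sym2 (Unit ⊕ Fin n))) := by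
    intro b' hb' h
    rw [Set.mem_singleton_iff, hE, Sym2.congr_right] at h
    exact hb' (by injection h)
  refine sdn_eq _ n ⟨({Sum.inl (Sum.inr a), Sum.inl (Sum.inr b)} :
      Set ((Unit ⊕ Fin n) ⊕ ({E} : Set (Sym2 (Unit ⊕ Fin n)))))ᶜ, ?_, ?_⟩ ?_
  · intro u hu
    rw [compl_compl] at hu
    rcases hu with rfl | hu
    · -- u = La, dominator X
      refine ⟨Sum.inr ⟨E, rfl⟩, by simp, ?_⟩
      rw [compl_compl]
      ext w
      simp only [Set.mem_inter_iff, mem_neighborSet, Set.mem_insert_iff,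
        Set.mem_singleton_iff]
      constructor
      · rintro ⟨hadj, (rfl | rfl)⟩
        · rfl
        · exact absurd hadj (hEb b hb)
      · rintro rfl
        exact ⟨hEa, Or.inl rfl⟩
    · rw [Set.mem_singleton_iff] at hu
      subst hu
      -- u = Lb, dominator c
      refine ⟨Sum.inl (Sum.inl ()), by simp, ?_⟩
      rw [compl_compl]
      ext w
      simp only [Set.mem_inter_iff, mem_neighborSet, Set.mem_insert_iff,
        Set.mem_singleton_iff]
      constructor
      · rintro ⟨hadj, (rfl | rfl)⟩
        · exact absurd (rfl : E ∈ ({E} : Set _)) hadj.2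
        · rfl
      · rintro rfl
        exact ⟨⟨by simp, hne b hb⟩, Or.inr rfl⟩
  · have hpair : ({Sum.inl (Sum.inr a), Sum.inl (Sum.inr b)} :
        Set ((Unit ⊕ Fin n) ⊕ ({E} : Set (Sym2 (Unit ⊕ Fin n))))).ncard = 2 := by
      refine Set.ncard_pair ?_
      intro h
      exact hb (Sum.inr.inj (Sum.inl.inj h)).symm
    have := Set.ncard_add_ncard_compl ({Sum.inl (Sum.inr a), Sum.inl (Sum.inr b)} :
        Set ((Unit ⊕ Fin n) ⊕ ({E} : Set (Sym2 (Unit ⊕ Fin n)))))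
    rw [hpair, hcard] at this
    omega
  · intro S hS
    suffices h2 : Sᶜ.ncard ≤ 2 by
      have := Set.ncard_add_ncard_compl S
      rw [hcard] at this
      omega
    set G2 := subdivide (completeBipartiteGraph Unit (Fin n)) {E} with hG2
    have F1 : ∀ b' : Fin n, b' ≠ a → Sum.inl (Sum.inr b') ∈ Sᶜ →
        Sum.inl (Sum.inl ()) ∈ S ∧ (Sum.inr ⟨E, rfl⟩ :
          (Unit ⊕ Fin n) ⊕ ({E} : Set (Sym2 (Unit ⊕ Fin n)))) ∈ S ∧
        ∀ b'' : Fin n, b'' ≠ a → Sum.inl (Sum.inr b'') ∈ Sᶜ → b'' = b' := by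
      intro b' hb' hmem
      obtain ⟨v, hvS, hv⟩ := hS _ hmem
      have hself : Sum.inl (Sum.inr b') ∈ G2.neighborSet v ∩ Sᶜ := hv ▸ rfl
      rcases v with (⟨⟩ | c') | f
      · -- v = c
        have hX : (Sum.inr ⟨E, rfl⟩ :
            (Unit ⊕ Fin n) ⊕ ({E} : Set (Sym2 (Unit ⊕ Fin n)))) ∈ S := by
          by_contra hXc
          have hm : (Sum.inr ⟨E, rfl⟩ :
              (Unit ⊕ Fin n) ⊕ ({E} : Set (Sym2 (Unit ⊕ Fin n)))) ∈
              G2.neighborSet (Sum.inl (Sum.inl ())) ∩ Sᶜ := ⟨hEc, hXc⟩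
          rw [hv] at hm
          simp at hm
        refine ⟨hvS, hX, ?_⟩
        intro b'' hb'' hmem''
        have hm : (Sum.inl (Sum.inr b'') :
            (Unit ⊕ Fin n) ⊕ ({E} : Set (Sym2 (Unit ⊕ Fin n)))) ∈
            G2.neighborSet (Sum.inl (Sum.inl ())) ∩ Sᶜ :=
          ⟨⟨by simp, hne b'' hb''⟩, hmem''⟩
        rw [hv] at hm
        rw [Set.mem_singleton_iff] at hm
        exact Sum.inr.inj (Sum.inl.inj hm)
      · exact absurd hself.1.1 (by simp)
      · exact absurd (show (Sum.inr b' : Unit ⊕ Fin n) ∈ E from f.2 ▸ hself.1)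
          (hEb b' hb')
    have F2 : Sum.inl (Sum.inr a) ∈ Sᶜ →
        (Sum.inr ⟨E, rfl⟩ :
          (Unit ⊕ Fin n) ⊕ ({E} : Set (Sym2 (Unit ⊕ Fin n)))) ∈ S ∧
        Sum.inl (Sum.inl ()) ∈ S := by
      intro hmem
      obtain ⟨v, hvS, hv⟩ := hS _ hmem
      have hself : Sum.inl (Sum.inr a) ∈ G2.neighborSet v ∩ Sᶜ := hv ▸ rfl
      rcases v with (⟨⟩ | c') | f
      · exact absurd (rfl : E ∈ ({E} : Set _)) hself.1.2
      · exact absurd hself.1.1 (by simp)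
      · have hf : f = ⟨E, rfl⟩ := Subtype.ext f.2
        subst hf
        refine ⟨hvS, ?_⟩
        by_contra hc
        have hm : (Sum.inl (Sum.inl ()) :
            (Unit ⊕ Fin n) ⊕ ({E} : Set (Sym2 (Unit ⊕ Fin n)))) ∈
            G2.neighborSet (Sum.inr ⟨E, rfl⟩) ∩ Sᶜ := ⟨hEc, hc⟩
        rw [hv] at hm
        simp at hm
    have hb2 : ∀ (p q : (Unit ⊕ Fin n) ⊕ ({E} : Set (Sym2 (Unit ⊕ Fin n)))),
        Sᶜ ⊆ {p, q} → Sᶜ.ncard ≤ 2 := by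
      intro p q hsub
      refine le_trans (Set.ncard_le_ncard hsub (Set.toFinite _)) ?_
      refine le_trans (Set.ncard_insert_le p {q}) ?_
      simp
    by_cases hex : ∃ b', b' ≠ a ∧ Sum.inl (Sum.inr b') ∈ Sᶜ
    · obtain ⟨b', hb', hbm⟩ := hex
      obtain ⟨hcS, hXS, huniq⟩ := F1 b' hb' hbm
      refine hb2 (Sum.inl (Sum.inr a)) (Sum.inl (Sum.inr b')) ?_
      rintro ((⟨⟩ | b'') | f) hw
      · exact absurd hcS hw
      · by_cases hba : b'' = a
        · subst hba; exact Or.inl rfl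
        · have := huniq b'' hba hw
          subst this
          exact Or.inr rfl
      · have hf : f = ⟨E, rfl⟩ := Subtype.ext f.2
        subst hf
        exact absurd hXS hw
    · push_neg at hex
      by_cases hLa : Sum.inl (Sum.inr a) ∈ Sᶜ
      · obtain ⟨hXS, hcS⟩ := F2 hLa
        refine hb2 (Sum.inl (Sum.inr a)) (Sum.inl (Sum.inr a)) ?_
        rintro ((⟨⟩ | b'') | f) hw
        · exact absurd hcS hw
        · by_cases hba : b'' = a
          · subst hba; exact Or.inl rfl
          · exact absurd hw (hex b'' hba)
        · have hf : f = ⟨E, rfl⟩ := Subtype.ext f.2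
          subst hf
          exact absurd hXS hw
      · refine hb2 (Sum.inl (Sum.inl ())) (Sum.inr ⟨E, rfl⟩) ?_
        rintro ((⟨⟩ | b'') | f) hw
        · exact Or.inl rfl
        · by_cases hba : b'' = a
          · subst hba; exact absurd hw hLa
          · exact absurd hw (hex b'' hba)
        · have hf : f = ⟨E, rfl⟩ := Subtype.ext f.2
          subst hf
          exact Or.inr rfl

/-- Every star of order at least 3 is in Class 2: subdividing any single edge of
`K_{1,n}` with `n ≥ 2` does not change the super domination number. -/
theorem star_subdivide_superDomNum (n : ℕ) (hn : 2 ≤ n) :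
    ∀ e ∈ (completeBipartiteGraph Unit (Fin n)).edgeSet,
      superDomNum (subdivide (completeBipartiteGraph Unit (Fin n)) {e}) =
        superDomNum (completeBipartiteGraph Unit (Fin n)) := by
  intro e
  induction e using Sym2.ind with
  | _ x y =>
    intro he
    rw [SimpleGraph.mem_edgeSet] at he
    rcases x with ⟨⟩ | a <;> rcases y with ⟨⟩ | a'
    · simp at he
    · rw [star_sdn n (by omega)]
      exact sub_sdn n hn a'
    · rw [Sym2.eq_swap, star_sdn n (by omega)]
      exact sub_sdn n hn a
    · simp at he
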